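/- There exists a black and white bin packing game with uniform sizes admitting an infinite sequence of improving deviations; hence colorful bin packing games do not in general possess the finite improvement path property. -/

import Mathlib

open Finset

/-- In a uniform-size game, a bin (list of item indices, bottom to top) is
feasible if no two adjacent items share a color and it holds at most `κ` items. -/
def UBinOK {n : ℕ} {C : Type*} (color : Fin n → C) (κ : ℕ) (b : List (Fin n)) : Prop :=
  (b.map color).Chain' (· ≠ ·) ∧ b.length ≤ κ

/-- A strategy profile is a packing if every item occurs in exactly one bin, once. -/
def IsPacking {n : ℕ} (σ : Fin n → List (Fin n)) : Prop :=
  ∀ i : Fin n, (∑ j : Fin n, ((σ j).count i)) = 1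

/-- The number of open (nonempty) bins of a profile. -/
def openBins {n : ℕ} (σ : Fin n → List (Fin n)) : ℕ :=
  (Finset.univ.filter fun j => σ j ≠ []).card

/-- Nash equilibrium of a uniform-size colorful bin packing game (the
egalitarian and proportional cost functions coincide): the profile is a feasible
packing and no item in a bin with `k` items can move to the top of another bin
feasibly holding it with at least `k` items. -/
def UNE {n : ℕ} {C : Type*} (color : Fin n → C) (κ : ℕ)
    (σ : Fin n → List (Fin n)) : Prop :=
  IsPacking σ ∧ (∀ j, UBinOK color κ (σ j)) ∧
    ∀ (i : Fin n) (j j' : Fin n), j ≠ j' → i ∈ σ j →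
      UBinOK color κ (σ j' ++ [i]) → (σ j').length < (σ j).length

/-- Item `i` is misplaced in bin `L`: it is adjacent (in the bin's order) to an
item of the same color. -/
def Misplaced {n : ℕ} {C : Type*} (color : Fin n → C) (L : List (Fin n))
    (i : Fin n) : Prop :=
  ∃ j : ℕ, j + 1 < L.length ∧ (L[j]? = some i ∨ L[j + 1]? = some i) ∧
    (L[j]?).map color = (L[j + 1]?).map color

/-- One improving deviation: item `i` moves from bin `l` to the top of bin `l'`
(which has room for it, deviations into infeasible bins being allowed), and its
cost strictly decreases: it is not misplaced afterwards, and beforehand it was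
either misplaced (infinite cost) or in a bin not larger than the destination. -/
def ImprovingStep {n : ℕ} {C : Type*} (color : Fin n → C) (κ : ℕ)
    (σ σ' : Fin n → List (Fin n)) : Prop :=
  ∃ (i : Fin n) (l l' : Fin n), l ≠ l' ∧ i ∈ σ l ∧ (σ l').length < κ ∧
    σ' l = (σ l).erase i ∧ σ' l' = σ l' ++ [i] ∧
    (∀ l'', l'' ≠ l → l'' ≠ l' → σ' l'' = σ l'') ∧
    ¬ Misplaced color (σ' l') i ∧
    (Misplaced color (σ l) i ∨ (σ l).length ≤ (σ l').length)

/-- There is a black and white bin packing game with uniform sizes admitting an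
infinite sequence of improving deviations; hence colorful bin packing games do
not in general possess the finite improvement path property. -/

lemma misplaced_iff {n : ℕ} {C : Type*} (color : Fin n → C) (L : List (Fin n)) (i : Fin n) :
    Misplaced color L i ↔ ∃ j ∈ Finset.range L.length, j + 1 < L.length ∧
      (L[j]? = some i ∨ L[j + 1]? = some i) ∧
      (L[j]?).map color = (L[j + 1]?).map color := by
  constructor
  · rintro ⟨j, h1, h2, h3⟩
    exact ⟨j, Finset.mem_range.2 (by omega), h1, h2, h3⟩
  · rintro ⟨j, -, h1, h2, h3⟩
    exact ⟨j, h1, h2, h3⟩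

def S : ℕ → Fin 6 → List (Fin 6)
  | 0 => ![[5, 3, 1], [], [2, 4, 0], [], [], []]
  | 1 => ![[5, 3, 1, 4], [], [2, 0], [], [], []]
  | 2 => ![[3, 1, 4], [5], [2, 0], [], [], []]
  | 3 => ![[3, 1, 4], [], [2, 0, 5], [], [], []]
  | 4 => ![[3, 4], [], [2, 0, 5, 1], [], [], []]
  | 5 => ![[3, 4, 2], [], [0, 5, 1], [], [], []]
  | 6 => ![[3, 4, 2, 5], [], [0, 1], [], [], []]
  | 7 => ![[4, 2, 5], [3], [0, 1], [], [], []]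
  | 8 => ![[4, 2, 5], [], [0, 1, 3], [], [], []]
  | 9 => ![[4, 5], [], [0, 1, 3, 2], [], [], []]
  | 10 => ![[4, 5, 0], [], [1, 3, 2], [], [], []]
  | 11 => ![[4, 5, 0, 3], [], [1, 2], [], [], []]
  | 12 => ![[5, 0, 3], [4], [1, 2], [], [], []]
  | 13 => ![[5, 0, 3], [], [1, 2, 4], [], [], []]
  | 14 => ![[5, 3], [], [1, 2, 4, 0], [], [], []]
  | _ => ![[], [], [], [], [], []]

theorem no_finite_improvement_path :
    ∃ (n κ : ℕ) (color : Fin n → Bool)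
      (f : ℕ → (Fin n → List (Fin n))),
      2 ≤ κ ∧ (∀ t, IsPacking (f t)) ∧
      ∀ t, ImprovingStep color κ (f t) (f (t + 1)) := by
  refine ⟨6, 4, ![true, true, true, false, false, false], fun t => S (t % 15),
    by norm_num, fun t => ?_, fun t => ?_⟩
  · show IsPacking (S (t % 15))
    obtain ⟨r, hr, hre⟩ : ∃ r, r < 15 ∧ t % 15 = r := ⟨_, Nat.mod_lt _ (by norm_num), rfl⟩
    rw [hre]
    interval_cases r <;> · unfold IsPacking; decide
  · show ImprovingStep _ 4 (S (t % 15)) (S ((t + 1) % 15))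
    have h1 : (t + 1) % 15 = (t % 15 + 1) % 15 := by omega
    rw [h1]
    obtain ⟨r, hr, hre⟩ : ∃ r, r < 15 ∧ t % 15 = r := ⟨_, Nat.mod_lt _ (by norm_num), rfl⟩
    rw [hre]
    interval_cases r
    exact ⟨4, 2, 0, by decide, by decide, by decide, by decide, by decide, by decide, by simp only [misplaced_iff]; decide, Or.inr (by decide)⟩
    exact ⟨5, 0, 1, by decide, by decide, by decide, by decide, by decide, by decide, by simp only [misplaced_iff]; decide, Or.inl (by simp only [misplaced_iff]; decide)⟩
    exact ⟨5, 1, 2, by decide, by decide, by decide, by decide, by decide, by decide, by simp only [misplaced_iff]; decide, Or.inr (by decide)⟩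
    exact ⟨1, 0, 2, by decide, by decide, by decide, by decide, by decide, by decide, by simp only [misplaced_iff]; decide, Or.inr (by decide)⟩
    exact ⟨2, 2, 0, by decide, by decide, by decide, by decide, by decide, by decide, by simp only [misplaced_iff]; decide, Or.inl (by simp only [misplaced_iff]; decide)⟩
    exact ⟨5, 2, 0, by decide, by decide, by decide, by decide, by decide, by decide, by simp only [misplaced_iff]; decide, Or.inr (by decide)⟩
    exact ⟨3, 0, 1, by decide, by decide, by decide, by decide, by decide, by decide, by simp only [misplaced_iff]; decide, Or.inl (by simp only [misplaced_iff]; decide)⟩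
    exact ⟨3, 1, 2, by decide, by decide, by decide, by decide, by decide, by decide, by simp only [misplaced_iff]; decide, Or.inr (by decide)⟩
    exact ⟨2, 0, 2, by decide, by decide, by decide, by decide, by decide, by decide, by simp only [misplaced_iff]; decide, Or.inr (by decide)⟩
    exact ⟨0, 2, 0, by decide, by decide, by decide, by decide, by decide, by decide, by simp only [misplaced_iff]; decide, Or.inl (by simp only [misplaced_iff]; decide)⟩
    exact ⟨3, 2, 0, by decide, by decide, by decide, by decide, by decide, by decide, by simp only [misplaced_iff]; decide, Or.inr (by decide)⟩
    exact ⟨4, 0, 1, by decide, by decide, by decide, by decide, by decide, by decide, by simp only [misplaced_iff]; decide, Or.inl (by simp only [misplaced_iff]; decide)⟩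
    exact ⟨4, 1, 2, by decide, by decide, by decide, by decide, by decide, by decide, by simp only [misplaced_iff]; decide, Or.inr (by decide)⟩
    exact ⟨0, 0, 2, by decide, by decide, by decide, by decide, by decide, by decide, by simp only [misplaced_iff]; decide, Or.inr (by decide)⟩
    exact ⟨1, 2, 0, by decide, by decide, by decide, by decide, by decide, by decide, by simp only [misplaced_iff]; decide, Or.inl (by simp only [misplaced_iff]; decide)⟩
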